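/- Let k ≥ 55 and G ≤ S_k transitive with |G| ≤ 2^{k/2}, ε ∈ (0, 1/2). Suppose Y ⊆ 𝔽₂^k/G satisfies μ(π_G^{-1}(Y)) ≥ 1/2, and suppose that every f : Y → ℓ₁ satisfies the Cheeger/Poincaré inequality ∬_{Y×Y} ‖f(O)−f(O')‖₁ dμ_{𝔽₂^k/G}(O)dμ_{𝔽₂^k/G}(O') ≤ C√(log k) ∬ ‖f(O)−f(O')‖₁ dϑ^{1/(β log k)}_{𝔽₂^k/G}(O,O') for universal constants C, β. Then any f : Y → ℓ₁ satisfying d_{𝔽₂^k/G}(Gx,Gy)^{1−ε} ≤ ‖f(Gx)−f(Gy)‖₁ ≤ α d_{𝔽₂^k/G}(Gx,Gy)^{1−ε} for all orbits in Y must have α ≳ (log k)^{1/2 − ε}. -/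

import Mathlib

open Finset
open scoped ENNReal

instance : Fact ((1 : ℝ≥0∞) ≤ 1) := ⟨le_rfl⟩

/-- The action of a permutation of coordinates on `𝔽₂^k`. -/
def permAct {k : ℕ} (g : Equiv.Perm (Fin k)) (x : Fin k → ZMod 2) : Fin k → ZMod 2 :=
  x ∘ g.symm

/-- The noise measure `ϑ^p` on `𝔽₂^k × 𝔽₂^k`. -/
noncomputable def noiseMeasure {k : ℕ} (p : ℝ) (x y : Fin k → ZMod 2) : ℝ :=
  p ^ hammingDist x y * (1 - p) ^ (k - hammingDist x y) / 2 ^ k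

/-- The quotient distance `d_{𝔽₂^k/G}(Gx,Gy) = min_{g ∈ G} d(gx,y)`. -/
noncomputable def quotDist {k : ℕ} (G : Subgroup (Equiv.Perm (Fin k)))
    (x y : Fin k → ZMod 2) : ℝ :=
  ⨅ g : G, (hammingDist (permAct (g : Equiv.Perm (Fin k)) x) y : ℝ)


lemma zmod2_add_one {a b : ZMod 2} (h : a ≠ b) : a + 1 = b := by revert h; revert a b; decide

lemma zmod2_ne_add_one (a : ZMod 2) : a ≠ a + 1 := by revert a; decide

lemma card_hamming_fiber {k : ℕ} (x : Fin k → ZMod 2) (j : ℕ) :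
    ((Finset.univ.filter fun y : Fin k → ZMod 2 => hammingDist x y = j).card = k.choose j) := by
  classical
  have : ((Finset.univ : Finset (Fin k)).powersetCard j).card = k.choose j := by
    simp [Finset.card_powersetCard]
  rw [← this]
  apply Finset.card_bij' (fun y _ => Finset.univ.filter fun i => x i ≠ y i)
    (fun s _ => fun i => x i + (if i ∈ s then 1 else 0))
  · intro y hy
    simp only [Finset.mem_filter, Finset.mem_univ, true_and] at hy
    simp only [Finset.mem_powersetCard]
    exact ⟨Finset.filter_subset _ _ |>.trans (by simp), hy⟩
  · intro s hs
    simp only [Finset.mem_powersetCard] at hs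
    simp only [Finset.mem_filter, Finset.mem_univ, true_and]
    rw [← hs.2]
    show (Finset.univ.filter fun i => x i ≠ x i + _).card = s.card
    congr 1
    ext i
    by_cases h : i ∈ s <;> simp [h, zmod2_ne_add_one]
  · intro y hy
    funext i
    by_cases h : x i ≠ y i
    · simp [h, zmod2_add_one h]
    · push_neg at h
      simp [h]
  · intro s hs
    ext i
    by_cases h : i ∈ s <;> simp [h, zmod2_ne_add_one]

lemma sum_hamming_fiber {k : ℕ} (x : Fin k → ZMod 2) (F : ℕ → ℝ) :
    ∑ y : Fin k → ZMod 2, F (hammingDist x y)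
      = ∑ j ∈ Finset.range (k + 1), (k.choose j : ℝ) * F j := by
  classical
  rw [← Finset.sum_fiberwise_of_maps_to (g := fun y : Fin k → ZMod 2 => hammingDist x y)
      (t := Finset.range (k + 1)) (fun y _ => Finset.mem_range.2 (Nat.lt_succ_of_le
        (hammingDist_le_card_fintype.trans_eq (by simp))))]
  refine Finset.sum_congr rfl fun j _ => ?_
  rw [Finset.sum_congr rfl (fun y hy => ?_), Finset.sum_const, card_hamming_fiber,
    nsmul_eq_mul]
  · simp only [Finset.mem_filter] at hy
    rw [hy.2]

lemma sum_binom_weights {k : ℕ} (p q : ℝ) :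
    ∑ j ∈ Finset.range (k + 1), (k.choose j : ℝ) * (p ^ j * q ^ (k - j)) = (p + q) ^ k := by
  rw [add_pow]
  exact Finset.sum_congr rfl fun j _ => by ring

lemma binom_mean {k : ℕ} (hk : 1 ≤ k) (p : ℝ) :
    ∑ j ∈ Finset.range (k + 1), (k.choose j : ℝ) * (p ^ j * (1 - p) ^ (k - j)) * j
      = k * p := by
  obtain ⟨k', rfl⟩ : ∃ k', k = k' + 1 := ⟨k - 1, (Nat.succ_pred_eq_of_pos hk).symm⟩
  rw [Finset.sum_range_succ']
  simp only [Nat.cast_zero, mul_zero, add_zero]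
  have key : ∀ i ∈ Finset.range (k' + 1),
      ((k' + 1).choose (i + 1) : ℝ) * (p ^ (i + 1) * (1 - p) ^ (k' + 1 - (i + 1))) * ((i + 1 : ℕ) : ℝ)
        = ((k' + 1 : ℕ) : ℝ) * p * ((k'.choose i : ℝ) * (p ^ i * (1 - p) ^ (k' - i))) := by
    intro i _
    have h := Nat.add_one_mul_choose_eq k' i
    have h' : ((k' + 1 : ℕ) : ℝ) * (k'.choose i : ℝ)
        = ((k' + 1).choose (i + 1) : ℝ) * ((i + 1 : ℕ) : ℝ) := by
      exact_mod_cast congrArg (Nat.cast (R := ℝ)) h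
    have hsub : k' + 1 - (i + 1) = k' - i := by omega
    rw [hsub]
    have hps : p ^ (i + 1) = p ^ i * p := pow_succ p i
    rw [hps]
    linear_combination (-(p ^ i * p * (1 - p) ^ (k' - i))) * h'
  rw [Finset.sum_congr rfl key, ← Finset.mul_sum, sum_binom_weights]
  push_cast
  ring

lemma binom_moment {k : ℕ} (hk : 1 ≤ k) {p e : ℝ} (hp0 : 0 ≤ p) (hp1 : p ≤ 1)
    (he0 : 0 ≤ e) (he1 : e ≤ 1) :
    ∑ j ∈ Finset.range (k + 1), (k.choose j : ℝ) * (p ^ j * (1 - p) ^ (k - j)) * (j : ℝ) ^ e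
      ≤ (k * p) ^ e := by
  have hw : ∀ j ∈ Finset.range (k + 1), 0 ≤ (k.choose j : ℝ) * (p ^ j * (1 - p) ^ (k - j)) := by
    intro j _
    have : (0:ℝ) ≤ 1 - p := by linarith
    positivity
  have hsum : ∑ j ∈ Finset.range (k + 1), (k.choose j : ℝ) * (p ^ j * (1 - p) ^ (k - j)) = 1 := by
    rw [sum_binom_weights]; norm_num
  have hjen := (Real.concaveOn_rpow he0 he1).le_map_sum hw hsum
    (p := fun j : ℕ => (j : ℝ)) (fun j _ => Set.mem_Ici.2 (Nat.cast_nonneg j))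
  simp only [smul_eq_mul] at hjen
  calc ∑ j ∈ Finset.range (k + 1), (k.choose j : ℝ) * (p ^ j * (1 - p) ^ (k - j)) * (j : ℝ) ^ e
      ≤ (∑ j ∈ Finset.range (k + 1),
          (k.choose j : ℝ) * (p ^ j * (1 - p) ^ (k - j)) * (j : ℝ)) ^ e := hjen
    _ = (k * p) ^ e := by rw [binom_mean hk p]

lemma ball_card_bound {k : ℕ} (z : Fin k → ZMod 2) (m : ℕ) :
    (((Finset.univ.filter fun y : Fin k → ZMod 2 => hammingDist z y < m).card : ℝ))
      ≤ (9/8 : ℝ) ^ k * 8 ^ m := by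
  classical
  have key : ((Finset.univ.filter fun y : Fin k → ZMod 2 => hammingDist z y < m).card : ℝ)
      * (1/8 : ℝ) ^ m ≤ (9/8 : ℝ) ^ k := by
    calc ((Finset.univ.filter fun y : Fin k → ZMod 2 => hammingDist z y < m).card : ℝ)
          * (1/8 : ℝ) ^ m
        = ∑ _y ∈ Finset.univ.filter fun y : Fin k → ZMod 2 => hammingDist z y < m,
            (1/8 : ℝ) ^ m := by rw [Finset.sum_const, nsmul_eq_mul]
      _ ≤ ∑ y ∈ Finset.univ.filter fun y : Fin k → ZMod 2 => hammingDist z y < m,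
            (1/8 : ℝ) ^ hammingDist z y := by
          refine Finset.sum_le_sum fun y hy => ?_
          simp only [Finset.mem_filter] at hy
          exact pow_le_pow_of_le_one (by norm_num) (by norm_num) hy.2.le
      _ ≤ ∑ y : Fin k → ZMod 2, (1/8 : ℝ) ^ hammingDist z y := by
          refine Finset.sum_le_sum_of_subset_of_nonneg (Finset.filter_subset _ _)
            fun y _ _ => by positivity
      _ = ∑ j ∈ Finset.range (k + 1), (k.choose j : ℝ) * ((1/8 : ℝ) ^ j * 1 ^ (k - j)) := by
          rw [sum_hamming_fiber z (fun j => (1/8 : ℝ) ^ j)]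
          exact Finset.sum_congr rfl fun j _ => by ring
      _ = (9/8 : ℝ) ^ k := by rw [sum_binom_weights]; norm_num
  have h8 : (0:ℝ) < (1/8 : ℝ) ^ m := by positivity
  calc ((Finset.univ.filter fun y : Fin k → ZMod 2 => hammingDist z y < m).card : ℝ)
      = (((Finset.univ.filter fun y : Fin k → ZMod 2 => hammingDist z y < m).card : ℝ)
          * (1/8 : ℝ) ^ m) * 8 ^ m := by
        rw [mul_assoc, ← mul_pow]; norm_num
    _ ≤ (9/8 : ℝ) ^ k * 8 ^ m := by
        have h8' : (0:ℝ) ≤ (8:ℝ) ^ m := by positivity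
        exact mul_le_mul_of_nonneg_right key h8'

section quotDistLemmas

variable {k : ℕ} {G : Subgroup (Equiv.Perm (Fin k))} {x y : Fin k → ZMod 2}

lemma quotDist_nonneg : 0 ≤ quotDist G x y :=
  Real.iInf_nonneg fun _ => Nat.cast_nonneg _

lemma quotDist_le (g : G) :
    quotDist G x y ≤ (hammingDist (permAct (g : Equiv.Perm (Fin k)) x) y : ℝ) :=
  ciInf_le ⟨0, by rintro _ ⟨g, rfl⟩; exact Nat.cast_nonneg _⟩ g

lemma permAct_one (x : Fin k → ZMod 2) : permAct 1 x = x := rfl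

lemma quotDist_le_hammingDist : quotDist G x y ≤ (hammingDist x y : ℝ) := by
  have := quotDist_le (G := G) (x := x) (y := y) (1 : G)
  simpa [OneMemClass.coe_one, permAct_one] using this

lemma exists_of_quotDist_lt {r : ℝ} (h : quotDist G x y < r) :
    ∃ g : G, (hammingDist (permAct (g : Equiv.Perm (Fin k)) x) y : ℝ) < r := by
  haveI : Nonempty G := ⟨1⟩
  exact exists_lt_of_ciInf_lt h

lemma one_le_quotDist (h : ∀ g : G, permAct (g : Equiv.Perm (Fin k)) x ≠ y) :
    1 ≤ quotDist G x y := by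
  haveI : Nonempty G := ⟨1⟩
  refine le_ciInf fun g => ?_
  have := hammingDist_pos.2 (h g)
  exact_mod_cast this

end quotDistLemmas

lemma noise_moment {k : ℕ} (hk : 1 ≤ k) {p e : ℝ} (hp0 : 0 ≤ p) (hp1 : p ≤ 1)
    (he0 : 0 ≤ e) (he1 : e ≤ 1) :
    ∑ x : Fin k → ZMod 2, ∑ y : Fin k → ZMod 2,
        noiseMeasure p x y * (hammingDist x y : ℝ) ^ e ≤ (k * p) ^ e := by
  have inner : ∀ x : Fin k → ZMod 2,
      ∑ y : Fin k → ZMod 2, noiseMeasure p x y * (hammingDist x y : ℝ) ^ e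
        ≤ (1 / 2 ^ k) * (k * p) ^ e := by
    intro x
    have := sum_hamming_fiber x
      (fun j => p ^ j * (1 - p) ^ (k - j) / 2 ^ k * (j : ℝ) ^ e)
    rw [show (∑ y : Fin k → ZMod 2, noiseMeasure p x y * (hammingDist x y : ℝ) ^ e)
        = ∑ y : Fin k → ZMod 2,
            (fun j => p ^ j * (1 - p) ^ (k - j) / 2 ^ k * (j : ℝ) ^ e) (hammingDist x y)
      from rfl, this]
    have h2 : (0:ℝ) < 2 ^ k := by positivity
    calc ∑ j ∈ Finset.range (k + 1),
            (k.choose j : ℝ) * (p ^ j * (1 - p) ^ (k - j) / 2 ^ k * (j : ℝ) ^ e)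
        = (1 / 2 ^ k) * ∑ j ∈ Finset.range (k + 1),
            (k.choose j : ℝ) * (p ^ j * (1 - p) ^ (k - j)) * (j : ℝ) ^ e := by
          rw [Finset.mul_sum]; exact Finset.sum_congr rfl fun j _ => by ring
      _ ≤ (1 / 2 ^ k) * (k * p) ^ e := by
          have := binom_moment hk hp0 hp1 he0 he1
          have h1 : (0:ℝ) ≤ 1 / 2 ^ k := by positivity
          exact mul_le_mul_of_nonneg_left this h1
  calc ∑ x : Fin k → ZMod 2, ∑ y : Fin k → ZMod 2,
          noiseMeasure p x y * (hammingDist x y : ℝ) ^ e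
      ≤ ∑ _x : Fin k → ZMod 2, (1 / 2 ^ k : ℝ) * (k * p) ^ e :=
        Finset.sum_le_sum fun x _ => inner x
    _ = (k * p) ^ e := by
        rw [Finset.sum_const, nsmul_eq_mul]
        simp only [Finset.card_univ, Fintype.card_fun, Fintype.card_fin, ZMod.card]
        field_simp
        norm_num

lemma count_close_pairs {k : ℕ} (G : Subgroup (Equiv.Perm (Fin k))) (m : ℕ) :
    (((Finset.univ ×ˢ Finset.univ : Finset ((Fin k → ZMod 2) × (Fin k → ZMod 2))).filter
        fun pr => quotDist G pr.1 pr.2 < (m : ℝ)).card : ℝ)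
      ≤ (Nat.card G : ℝ) * (2 ^ k * ((9/8 : ℝ) ^ k * 8 ^ m)) := by
  classical
  haveI : Fintype G := Fintype.ofFinite G
  set T := (Finset.univ ×ˢ Finset.univ : Finset ((Fin k → ZMod 2) × (Fin k → ZMod 2))).filter
    fun pr => quotDist G pr.1 pr.2 < (m : ℝ) with hT
  have hsub : T ⊆ (Finset.univ : Finset G).biUnion fun g =>
      (Finset.univ ×ˢ Finset.univ).filter
        fun pr => hammingDist (permAct (g : Equiv.Perm (Fin k)) pr.1) pr.2 < m := by
    intro pr hpr
    rw [hT, Finset.mem_filter] at hpr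
    obtain ⟨g, hg⟩ := exists_of_quotDist_lt hpr.2
    refine Finset.mem_biUnion.2 ⟨g, Finset.mem_univ _, ?_⟩
    rw [Finset.mem_filter]
    exact ⟨hpr.1, by exact_mod_cast hg⟩
  have hcard := Finset.card_le_card hsub
  have hbiUnion := Finset.card_biUnion_le (s := (Finset.univ : Finset G))
    (t := fun g : G => (Finset.univ ×ˢ Finset.univ).filter
      fun pr => hammingDist (permAct (g : Equiv.Perm (Fin k)) pr.1) pr.2 < m)
  have hper : ∀ g : G,
      (((Finset.univ ×ˢ Finset.univ : Finset ((Fin k → ZMod 2) × (Fin k → ZMod 2))).filter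
        fun pr => hammingDist (permAct (g : Equiv.Perm (Fin k)) pr.1) pr.2 < m).card : ℝ)
        ≤ 2 ^ k * ((9/8 : ℝ) ^ k * 8 ^ m) := by
    intro g
    have hsplit : (((Finset.univ ×ˢ Finset.univ :
          Finset ((Fin k → ZMod 2) × (Fin k → ZMod 2))).filter
        fun pr => hammingDist (permAct (g : Equiv.Perm (Fin k)) pr.1) pr.2 < m).card
        = ∑ x : Fin k → ZMod 2, ((Finset.univ.filter
            fun y : Fin k → ZMod 2 =>
              hammingDist (permAct (g : Equiv.Perm (Fin k)) x) y < m).card)) := by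
      rw [Finset.card_filter, Finset.sum_product]
      exact Finset.sum_congr rfl fun x _ => (Finset.card_filter _ _).symm
    rw [hsplit]
    push_cast
    calc (∑ x : Fin k → ZMod 2, (((Finset.univ.filter
            fun y : Fin k → ZMod 2 =>
              hammingDist (permAct (g : Equiv.Perm (Fin k)) x) y < m).card : ℝ)))
        ≤ ∑ _x : Fin k → ZMod 2, (9/8 : ℝ) ^ k * 8 ^ m :=
          Finset.sum_le_sum fun x _ => ball_card_bound _ m
      _ = 2 ^ k * ((9/8 : ℝ) ^ k * 8 ^ m) := by
          rw [Finset.sum_const, nsmul_eq_mul]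
          simp only [Finset.card_univ, Fintype.card_fun, Fintype.card_fin, ZMod.card]
          push_cast; ring
  calc (T.card : ℝ) ≤ (((Finset.univ : Finset G).biUnion fun g =>
        (Finset.univ ×ˢ Finset.univ).filter
          fun pr => hammingDist (permAct (g : Equiv.Perm (Fin k)) pr.1) pr.2 < m).card : ℝ) := by
        exact_mod_cast hcard
    _ ≤ ∑ g : G, ((((Finset.univ ×ˢ Finset.univ).filter
          fun pr => hammingDist (permAct (g : Equiv.Perm (Fin k)) pr.1) pr.2 < m).card : ℝ)) := by
        exact_mod_cast hbiUnion
    _ ≤ ∑ _g : G, 2 ^ k * ((9/8 : ℝ) ^ k * 8 ^ m) := Finset.sum_le_sum fun g _ => hper g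
    _ = (Nat.card G : ℝ) * (2 ^ k * ((9/8 : ℝ) ^ k * 8 ^ m)) := by
        rw [Finset.sum_const, nsmul_eq_mul, Finset.card_univ, Nat.card_eq_fintype_card]

lemma rpow_9_8 : (9/8 : ℝ) ≤ (2 : ℝ) ^ ((3 : ℝ)/16) := by
  have h16 : ((9/8 : ℝ)) ^ (16 : ℕ) ≤ ((2 : ℝ) ^ ((3 : ℝ)/16)) ^ (16 : ℕ) := by
    rw [← Real.rpow_natCast ((2:ℝ) ^ ((3:ℝ)/16)) 16, ← Real.rpow_mul (by norm_num)]
    have : ((3:ℝ)/16) * (16 : ℕ) = ((3:ℕ) : ℝ) := by norm_num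
    rw [this, Real.rpow_natCast]
    norm_num
  exact le_of_pow_le_pow_left₀ (by norm_num) (by positivity) h16

lemma close_pairs_card_le {k : ℕ} (G : Subgroup (Equiv.Perm (Fin k))) (hk : 55 ≤ k)
    (hG : (Nat.card G : ℝ) ≤ (2 : ℝ) ^ ((k : ℝ) / 2)) :
    (((Finset.univ ×ˢ Finset.univ : Finset ((Fin k → ZMod 2) × (Fin k → ZMod 2))).filter
        fun pr => quotDist G pr.1 pr.2 < ((k / 16 : ℕ) : ℝ)).card : ℝ)
      ≤ (4 : ℝ) ^ k / 8 := by
  set m := k / 16 with hm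
  have h1 := count_close_pairs G m
  have hGnn : (0 : ℝ) ≤ (Nat.card G : ℝ) := Nat.cast_nonneg _
  -- bound each factor by an rpow of 2
  have h2k : ((2 : ℝ) ^ k) = (2 : ℝ) ^ ((k : ℝ)) := (Real.rpow_natCast 2 k).symm
  have h98 : ((9/8 : ℝ)) ^ k ≤ (2 : ℝ) ^ ((3/16 : ℝ) * (k : ℝ)) := by
    calc ((9/8 : ℝ)) ^ k ≤ ((2 : ℝ) ^ ((3:ℝ)/16)) ^ k :=
          pow_le_pow_left₀ (by norm_num) rpow_9_8 k
      _ = (2 : ℝ) ^ ((3/16 : ℝ) * (k : ℝ)) := by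
          rw [← Real.rpow_natCast ((2:ℝ) ^ ((3:ℝ)/16)) k, ← Real.rpow_mul (by norm_num)]
  have h8m : ((8 : ℝ)) ^ m ≤ (2 : ℝ) ^ ((3/16 : ℝ) * (k : ℝ)) := by
    have hmk : (m : ℝ) * 16 ≤ (k : ℝ) := by
      have := Nat.div_mul_le_self k 16
      exact_mod_cast this
    calc ((8 : ℝ)) ^ m = ((2 : ℝ) ^ (3 : ℕ)) ^ m := by norm_num
      _ = (2 : ℝ) ^ ((3 * m : ℕ)) := by rw [← pow_mul]
      _ = (2 : ℝ) ^ (((3 * m : ℕ) : ℝ)) := (Real.rpow_natCast 2 _).symm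
      _ ≤ (2 : ℝ) ^ ((3/16 : ℝ) * (k : ℝ)) := by
          apply Real.rpow_le_rpow_of_exponent_le (by norm_num)
          push_cast
          linarith
  have hprod : (Nat.card G : ℝ) * (2 ^ k * ((9/8 : ℝ) ^ k * 8 ^ m))
      ≤ (2 : ℝ) ^ ((k : ℝ)/2 + ((k : ℝ) + ((3/16 : ℝ) * (k : ℝ) + (3/16 : ℝ) * (k : ℝ)))) := by
    rw [Real.rpow_add (by norm_num), Real.rpow_add (by norm_num), Real.rpow_add (by norm_num)]
    have p1 : (0:ℝ) ≤ (2:ℝ) ^ k := by positivity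
    have p2 : (0:ℝ) ≤ (9/8:ℝ) ^ k := by positivity
    have p3 : (0:ℝ) ≤ (8:ℝ) ^ m := by positivity
    have q1 : (0:ℝ) ≤ (2:ℝ) ^ ((k:ℝ)/2) := by positivity
    have q2 : (0:ℝ) ≤ (2:ℝ) ^ ((k:ℝ)) := by positivity
    have q3 : (0:ℝ) ≤ (2:ℝ) ^ ((3/16:ℝ) * (k:ℝ)) := by positivity
    apply mul_le_mul hG _ (by positivity) q1
    apply mul_le_mul (le_of_eq h2k) _ (by positivity) q2
    exact mul_le_mul h98 h8m p3 q3
  have hexp : (2 : ℝ) ^ ((k : ℝ)/2 + ((k : ℝ) + ((3/16 : ℝ) * (k : ℝ) + (3/16 : ℝ) * (k : ℝ))))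
      ≤ (4 : ℝ) ^ k / 8 := by
    have h4 : (4 : ℝ) ^ k / 8 = (2 : ℝ) ^ (2 * (k : ℝ) - 3) := by
      rw [Real.rpow_sub (by norm_num)]
      have : (4 : ℝ) ^ k = (2 : ℝ) ^ (2 * (k : ℝ)) := by
        rw [show (4:ℝ) = (2:ℝ) ^ (2:ℕ) by norm_num, ← pow_mul, ← Real.rpow_natCast 2 (2 * k)]
        push_cast; ring_nf
      rw [this]
      norm_num
    rw [h4]
    apply Real.rpow_le_rpow_of_exponent_le (by norm_num)
    have hk' : (55 : ℝ) ≤ (k : ℝ) := by exact_mod_cast hk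
    linarith
  exact h1.trans (hprod.trans hexp)


/-- Deduction of the distortion lower bound `α ≳ (log k)^{1/2-ε}` from the
Cheeger/Poincaré inequality on a large `G`-invariant subset `Y` of `𝔽₂^k/G`
(stated on the cube via `G`-invariant data). -/
theorem stmt_14 (C β : ℝ) (hC : 0 < C) (hβ : 0 < β) :
    ∃ c : ℝ, 0 < c ∧
      ∀ k : ℕ, 55 ≤ k →
      ∀ G : Subgroup (Equiv.Perm (Fin k)),
        (∀ i j : Fin k, ∃ g ∈ G, g i = j) →
        (Nat.card G : ℝ) ≤ (2 : ℝ) ^ ((k : ℝ) / 2) →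
      ∀ ε : ℝ, ε ∈ Set.Ioo (0 : ℝ) (1 / 2) →
      ∀ Y : Finset (Fin k → ZMod 2),
        (∀ g ∈ G, ∀ x ∈ Y, permAct g x ∈ Y) →
        (1 / 2 : ℝ) ≤ (Y.card : ℝ) / 2 ^ k →
        (∀ f : (Fin k → ZMod 2) → lp (fun _ : ℕ => ℝ) 1,
          (∀ g ∈ G, ∀ x, f (permAct g x) = f x) →
          (1 / (4 : ℝ) ^ k) * (∑ x ∈ Y, ∑ y ∈ Y, ‖f x - f y‖) ≤
            C * Real.sqrt (Real.log k) *
              ∑ x ∈ Y, ∑ y ∈ Y, noiseMeasure (1 / (β * Real.log k)) x y * ‖f x - f y‖) →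
      ∀ (α : ℝ) (f : (Fin k → ZMod 2) → lp (fun _ : ℕ => ℝ) 1),
        (∀ g ∈ G, ∀ x, f (permAct g x) = f x) →
        (∀ x ∈ Y, ∀ y ∈ Y,
          quotDist G x y ^ (1 - ε) ≤ ‖f x - f y‖ ∧
          ‖f x - f y‖ ≤ α * quotDist G x y ^ (1 - ε)) →
        c * Real.log k ^ ((1 : ℝ) / 2 - ε) ≤ α := by
  classical
  refine ⟨min (min (β/32) 1 / (8 * C)) (Real.sqrt (β/2)), lt_min (by positivity)
    (Real.sqrt_pos.2 (by positivity)), ?_⟩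
  intro k hk G _hGtrans hG ε hε Y _hYinv hYcard hPoin α f hfinv hfdist
  haveI : Fintype G := Fintype.ofFinite G
  obtain ⟨hε0, hε2⟩ := hε
  set L := Real.log k with hL
  have hk0 : 0 < k := by omega
  have hkR : (55 : ℝ) ≤ (k : ℝ) := by exact_mod_cast hk
  have hL1 : 1 ≤ L := by
    rw [hL, Real.le_log_iff_exp_le (by positivity)]
    have := Real.exp_one_lt_d9
    linarith
  have hL0 : 0 < L := lt_of_lt_of_le one_pos hL1
  -- |Y| is large
  have hYc : (2 : ℝ) ^ k / 2 ≤ (Y.card : ℝ) := by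
    have h2 : (0:ℝ) < 2 ^ k := by positivity
    rw [le_div_iff₀ h2] at hYcard
    linarith
  -- step 1 : α ≥ 1
  have hα1 : (1 : ℝ) ≤ α := by
    have hYne : Y.Nonempty := by
      rw [← Finset.card_pos]
      rcases Nat.eq_zero_or_pos Y.card with h0 | h
      · exfalso
        rw [h0] at hYc
        simp only [Nat.cast_zero] at hYc
        have : (0:ℝ) < 2 ^ k / 2 := by positivity
        linarith
      · exact h
    obtain ⟨x, hx⟩ := hYne
    set O : Finset (Fin k → ZMod 2) :=
      Finset.image (fun g : G => permAct (g : Equiv.Perm (Fin k)) x) Finset.univ with hO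
    have hOcard : (O.card : ℝ) ≤ (Nat.card G : ℝ) := by
      have := Finset.card_image_le (s := (Finset.univ : Finset G))
        (f := fun g : G => permAct (g : Equiv.Perm (Fin k)) x)
      rw [Finset.card_univ, ← Nat.card_eq_fintype_card] at this
      exact_mod_cast this
    have hOlt : O.card < Y.card := by
      have h1 : (2:ℝ) ^ ((k:ℝ)/2) < (2:ℝ) ^ k / 2 := by
        have : (2:ℝ) ^ k / 2 = (2:ℝ) ^ ((k:ℝ) - 1) := by
          rw [Real.rpow_sub (by norm_num), Real.rpow_one, Real.rpow_natCast]
        rw [this]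
        apply Real.rpow_lt_rpow_of_exponent_lt (by norm_num)
        linarith
      have : (O.card : ℝ) < (Y.card : ℝ) := by
        calc (O.card : ℝ) ≤ (Nat.card G : ℝ) := hOcard
          _ ≤ (2:ℝ) ^ ((k:ℝ)/2) := hG
          _ < (2:ℝ) ^ k / 2 := h1
          _ ≤ (Y.card : ℝ) := hYc
      exact_mod_cast this
    have hns : ¬ Y ⊆ O := fun hsub => absurd (Finset.card_le_card hsub) (by omega)
    obtain ⟨y, hy, hyO⟩ := Finset.not_subset.1 hns
    have hq1 : 1 ≤ quotDist G x y := by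
      apply one_le_quotDist
      intro g hgy
      exact hyO (by rw [hO]; exact Finset.mem_image.2 ⟨g, Finset.mem_univ _, hgy⟩)
    have hqe : 1 ≤ quotDist G x y ^ (1 - ε) :=
      Real.one_le_rpow hq1 (by linarith)
    obtain ⟨hlo, hhi⟩ := hfdist x hx y hy
    nlinarith
  by_cases hcase : β * L < 2
  · -- small case : c * L^(1/2-ε) ≤ 1 ≤ α
    have h1 : min (min (β/32) 1 / (8 * C)) (Real.sqrt (β/2)) * L ^ ((1:ℝ)/2 - ε)
        ≤ Real.sqrt (β/2) * L ^ ((1:ℝ)/2 - ε) := by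
      apply mul_le_mul_of_nonneg_right (min_le_right _ _)
      exact Real.rpow_nonneg (le_of_lt hL0) _
    have h2 : L ^ ((1:ℝ)/2 - ε) ≤ Real.sqrt L := by
      rw [Real.sqrt_eq_rpow]
      exact Real.rpow_le_rpow_of_exponent_le hL1 (by linarith)
    have h3 : Real.sqrt (β/2) * Real.sqrt L ≤ 1 := by
      rw [← Real.sqrt_mul (by positivity), ← Real.sqrt_one]
      apply Real.sqrt_le_sqrt
      nlinarith
    calc min (min (β/32) 1 / (8 * C)) (Real.sqrt (β/2)) * L ^ ((1:ℝ)/2 - ε)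
        ≤ Real.sqrt (β/2) * L ^ ((1:ℝ)/2 - ε) := h1
      _ ≤ Real.sqrt (β/2) * Real.sqrt L :=
          mul_le_mul_of_nonneg_left h2 (Real.sqrt_nonneg _)
      _ ≤ 1 := h3
      _ ≤ α := hα1
  · -- main case
    push_neg at hcase
    set p : ℝ := 1 / (β * L) with hp
    have hβL : (0:ℝ) < β * L := by positivity
    have hp0 : 0 < p := by rw [hp]; positivity
    have hp1 : p ≤ 1/2 := by
      rw [hp, div_le_div_iff₀ hβL (by norm_num)]
      linarith
    set e : ℝ := 1 - ε with he
    have he0 : 0 < e := by rw [he]; linarith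
    have he1 : e ≤ 1 := by rw [he]; linarith
    set m : ℕ := k / 16 with hm
    have hm3 : 3 ≤ m := by omega
    have hmk : (k : ℝ) ≤ 32 * m := by
      have : k ≤ 32 * m := by omega
      exact_mod_cast this
    have hm16 : (m : ℝ) * 16 ≤ (k : ℝ) := by
      have := Nat.div_mul_le_self k 16
      exact_mod_cast this
    -- the set of close pairs is small
    set T : Finset ((Fin k → ZMod 2) × (Fin k → ZMod 2)) :=
      (Y ×ˢ Y).filter fun pr => quotDist G pr.1 pr.2 < (m : ℝ) with hT
    have hTY : T ⊆ Y ×ˢ Y := Finset.filter_subset _ _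
    have hTcard : (T.card : ℝ) ≤ (4:ℝ) ^ k / 8 := by
      have hsub : T ⊆ (Finset.univ ×ˢ Finset.univ).filter
          fun pr => quotDist G pr.1 pr.2 < (m : ℝ) := by
        intro pr hpr
        rw [hT, Finset.mem_filter] at hpr
        exact Finset.mem_filter.2 ⟨by simp, hpr.2⟩
      have := Finset.card_le_card hsub
      calc (T.card : ℝ) ≤ _ := by exact_mod_cast this
        _ ≤ (4:ℝ) ^ k / 8 := close_pairs_card_le G hk hG
    set D : Finset ((Fin k → ZMod 2) × (Fin k → ZMod 2)) := (Y ×ˢ Y) \ T with hD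
    have hDcard : (4:ℝ) ^ k / 8 ≤ (D.card : ℝ) := by
      have h1 : D.card = Y.card * Y.card - T.card := by
        rw [hD, Finset.card_sdiff_of_subset hTY, Finset.card_product]
      have h2 : (T.card : ℝ) ≤ (Y.card : ℝ) * Y.card := by
        have := Finset.card_le_card hTY
        rw [Finset.card_product] at this
        exact_mod_cast this
      have h3 : (D.card : ℝ) = (Y.card : ℝ) * Y.card - T.card := by
        rw [h1]
        have := Finset.card_le_card hTY
        rw [Finset.card_product] at this
        push_cast [Nat.cast_sub this]
        ring
      have h4 : (4:ℝ) ^ k / 4 ≤ (Y.card : ℝ) * Y.card := by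
        have h5 : (4:ℝ) ^ k = ((2:ℝ) ^ k) * ((2:ℝ) ^ k) := by
          rw [← mul_pow]; norm_num
        have h6 : (0:ℝ) ≤ (2:ℝ) ^ k / 2 := by positivity
        calc (4:ℝ) ^ k / 4 = ((2:ℝ) ^ k / 2) * ((2:ℝ) ^ k / 2) := by rw [h5]; ring
          _ ≤ (Y.card : ℝ) * Y.card := mul_le_mul hYc hYc h6 (Nat.cast_nonneg _)
      rw [h3]
      linarith
    -- lower bound on the L¹ spread
    have hS1 : (4:ℝ) ^ k / 8 * (m : ℝ) ^ e ≤ ∑ x ∈ Y, ∑ y ∈ Y, ‖f x - f y‖ := by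
      have step1 : ∑ x ∈ Y, ∑ y ∈ Y, quotDist G x y ^ e ≤ ∑ x ∈ Y, ∑ y ∈ Y, ‖f x - f y‖ :=
        Finset.sum_le_sum fun x hx => Finset.sum_le_sum fun y hy => (hfdist x hx y hy).1
      have step2 : ∑ pr ∈ Y ×ˢ Y, quotDist G pr.1 pr.2 ^ e
          = ∑ x ∈ Y, ∑ y ∈ Y, quotDist G x y ^ e := by rw [Finset.sum_product]
      have step3 : ∑ pr ∈ D, quotDist G pr.1 pr.2 ^ e ≤ ∑ pr ∈ Y ×ˢ Y, quotDist G pr.1 pr.2 ^ e :=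
        Finset.sum_le_sum_of_subset_of_nonneg (Finset.sdiff_subset) fun pr _ _ =>
          Real.rpow_nonneg quotDist_nonneg _
      have step4 : (D.card : ℝ) * (m : ℝ) ^ e ≤ ∑ pr ∈ D, quotDist G pr.1 pr.2 ^ e := by
        rw [← nsmul_eq_mul, ← Finset.sum_const]
        apply Finset.sum_le_sum
        intro pr hpr
        rw [hD, Finset.mem_sdiff] at hpr
        have hnot : ¬ quotDist G pr.1 pr.2 < (m : ℝ) := by
          intro hlt
          exact hpr.2 (Finset.mem_filter.2 ⟨hpr.1, hlt⟩)
        push_neg at hnot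
        exact Real.rpow_le_rpow (Nat.cast_nonneg _) hnot (le_of_lt he0)
      have step5 : (4:ℝ) ^ k / 8 * (m : ℝ) ^ e ≤ (D.card : ℝ) * (m : ℝ) ^ e :=
        mul_le_mul_of_nonneg_right hDcard (Real.rpow_nonneg (Nat.cast_nonneg _) _)
      calc (4:ℝ) ^ k / 8 * (m : ℝ) ^ e ≤ (D.card : ℝ) * (m : ℝ) ^ e := step5
        _ ≤ ∑ pr ∈ D, quotDist G pr.1 pr.2 ^ e := step4
        _ ≤ ∑ pr ∈ Y ×ˢ Y, quotDist G pr.1 pr.2 ^ e := step3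
        _ = ∑ x ∈ Y, ∑ y ∈ Y, quotDist G x y ^ e := step2
        _ ≤ ∑ x ∈ Y, ∑ y ∈ Y, ‖f x - f y‖ := step1
    -- upper bound on the noise sum
    have hnoise_nonneg : ∀ x y : Fin k → ZMod 2, 0 ≤ noiseMeasure p x y := by
      intro x y
      unfold noiseMeasure
      have h1 : (0:ℝ) ≤ 1 - p := by linarith
      positivity
    have hS2 : ∑ x ∈ Y, ∑ y ∈ Y, noiseMeasure p x y * ‖f x - f y‖
        ≤ α * ((k : ℝ) * p) ^ e := by
      have step1 : ∑ x ∈ Y, ∑ y ∈ Y, noiseMeasure p x y * ‖f x - f y‖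
          ≤ α * ∑ x ∈ Y, ∑ y ∈ Y, noiseMeasure p x y * quotDist G x y ^ e := by
        rw [Finset.mul_sum]
        apply Finset.sum_le_sum
        intro x hx
        rw [Finset.mul_sum]
        apply Finset.sum_le_sum
        intro y hy
        calc noiseMeasure p x y * ‖f x - f y‖
            ≤ noiseMeasure p x y * (α * quotDist G x y ^ e) :=
              mul_le_mul_of_nonneg_left (hfdist x hx y hy).2 (hnoise_nonneg x y)
          _ = α * (noiseMeasure p x y * quotDist G x y ^ e) := by ring
      have step2 : ∑ x ∈ Y, ∑ y ∈ Y, noiseMeasure p x y * quotDist G x y ^ e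
          ≤ ∑ x : Fin k → ZMod 2, ∑ y : Fin k → ZMod 2,
              noiseMeasure p x y * quotDist G x y ^ e := by
        have hterm : ∀ x y : Fin k → ZMod 2, 0 ≤ noiseMeasure p x y * quotDist G x y ^ e :=
          fun x y => mul_nonneg (hnoise_nonneg _ _) (Real.rpow_nonneg quotDist_nonneg _)
        calc ∑ x ∈ Y, ∑ y ∈ Y, noiseMeasure p x y * quotDist G x y ^ e
            ≤ ∑ x ∈ Y, ∑ y : Fin k → ZMod 2, noiseMeasure p x y * quotDist G x y ^ e := by
              apply Finset.sum_le_sum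
              intro x _
              exact Finset.sum_le_sum_of_subset_of_nonneg (Finset.subset_univ Y)
                fun y _ _ => hterm x y
          _ ≤ ∑ x : Fin k → ZMod 2, ∑ y : Fin k → ZMod 2,
              noiseMeasure p x y * quotDist G x y ^ e :=
              Finset.sum_le_sum_of_subset_of_nonneg (Finset.subset_univ Y)
                fun x _ _ => Finset.sum_nonneg fun y _ => hterm x y
      have step3 : ∑ x : Fin k → ZMod 2, ∑ y : Fin k → ZMod 2,
            noiseMeasure p x y * quotDist G x y ^ e
          ≤ ∑ x : Fin k → ZMod 2, ∑ y : Fin k → ZMod 2,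
            noiseMeasure p x y * (hammingDist x y : ℝ) ^ e := by
        apply Finset.sum_le_sum; intro x _
        apply Finset.sum_le_sum; intro y _
        apply mul_le_mul_of_nonneg_left _ (hnoise_nonneg x y)
        exact Real.rpow_le_rpow quotDist_nonneg quotDist_le_hammingDist (le_of_lt he0)
      have step4 := noise_moment (k := k) (by omega) (le_of_lt hp0) (by linarith)
        (le_of_lt he0) he1
      have hα0 : (0:ℝ) ≤ α := by linarith
      calc ∑ x ∈ Y, ∑ y ∈ Y, noiseMeasure p x y * ‖f x - f y‖
          ≤ α * ∑ x ∈ Y, ∑ y ∈ Y, noiseMeasure p x y * quotDist G x y ^ e := step1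
        _ ≤ α * ((k : ℝ) * p) ^ e := by
            apply mul_le_mul_of_nonneg_left _ hα0
            exact (step2.trans step3).trans step4
    -- Poincaré
    have hP := hPoin f hfinv
    have h4k : (0:ℝ) < (4:ℝ) ^ k := by positivity
    have hMain : (m : ℝ) ^ e / 8 ≤ C * Real.sqrt L * (α * ((k : ℝ) * p) ^ e) := by
      have h1 : (m : ℝ) ^ e / 8 = (1 / (4:ℝ) ^ k) * ((4:ℝ) ^ k / 8 * (m : ℝ) ^ e) := by
        field_simp
      rw [h1]
      calc (1 / (4:ℝ) ^ k) * ((4:ℝ) ^ k / 8 * (m : ℝ) ^ e)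
          ≤ (1 / (4:ℝ) ^ k) * (∑ x ∈ Y, ∑ y ∈ Y, ‖f x - f y‖) :=
            mul_le_mul_of_nonneg_left hS1 (by positivity)
        _ ≤ C * Real.sqrt L * ∑ x ∈ Y, ∑ y ∈ Y, noiseMeasure p x y * ‖f x - f y‖ := hP
        _ ≤ C * Real.sqrt L * (α * ((k : ℝ) * p) ^ e) := by
            apply mul_le_mul_of_nonneg_left hS2
            positivity
    -- final arithmetic
    set β₁ : ℝ := min (β/32) 1 with hβ₁
    have hβ₁0 : 0 < β₁ := lt_min (by positivity) one_pos
    have hkp : (0:ℝ) < (k : ℝ) * p := by positivity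
    have key1 : β₁ * (Real.sqrt L * (L ^ ((1:ℝ)/2 - ε) * ((k : ℝ) * p) ^ e)) ≤ (m : ℝ) ^ e := by
      have hsplit : ((k : ℝ) * p) * (β * L / 32) = (k : ℝ) / 32 := by
        rw [hp]; field_simp
      have hstep : (((k : ℝ) * p) * (β * L / 32)) ^ e ≤ (m : ℝ) ^ e := by
        apply Real.rpow_le_rpow (by positivity) _ (le_of_lt he0)
        rw [hsplit]
        linarith
      have hmul : (((k : ℝ) * p) * (β * L / 32)) ^ e
          = ((k : ℝ) * p) ^ e * ((β/32) ^ e * L ^ e) := by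
        rw [show ((k : ℝ) * p) * (β * L / 32) = ((k : ℝ) * p) * ((β/32) * L) by ring,
          Real.mul_rpow (by positivity) (by positivity),
          Real.mul_rpow (by positivity) (le_of_lt hL0)]
      have hβ₁e : β₁ ≤ (β/32) ^ e := by
        rcases le_or_gt (β/32) 1 with hb | hb
        · calc β₁ ≤ β/32 := min_le_left _ _
            _ = (β/32) ^ (1:ℝ) := (Real.rpow_one _).symm
            _ ≤ (β/32) ^ e := Real.rpow_le_rpow_of_exponent_ge (by positivity) hb he1
        · calc β₁ ≤ 1 := min_le_right _ _
            _ ≤ (β/32) ^ e := Real.one_le_rpow (le_of_lt hb) (le_of_lt he0)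
      have hLe : L ^ e = Real.sqrt L * L ^ ((1:ℝ)/2 - ε) := by
        rw [Real.sqrt_eq_rpow, ← Real.rpow_add hL0]
        congr 1
        rw [he]; ring
      calc β₁ * (Real.sqrt L * (L ^ ((1:ℝ)/2 - ε) * ((k : ℝ) * p) ^ e))
          ≤ (β/32) ^ e * (Real.sqrt L * (L ^ ((1:ℝ)/2 - ε) * ((k : ℝ) * p) ^ e)) := by
            apply mul_le_mul_of_nonneg_right hβ₁e
            positivity
        _ = ((k : ℝ) * p) ^ e * ((β/32) ^ e * L ^ e) := by rw [hLe]; ring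
        _ = (((k : ℝ) * p) * (β * L / 32)) ^ e := hmul.symm
        _ ≤ (m : ℝ) ^ e := hstep
    have hpos : (0:ℝ) < Real.sqrt L * ((k : ℝ) * p) ^ e := by
      have := Real.rpow_pos_of_pos hkp e
      have := Real.sqrt_pos.2 hL0
      positivity
    have key2 : β₁ * L ^ ((1:ℝ)/2 - ε) * (Real.sqrt L * ((k : ℝ) * p) ^ e)
        ≤ (8 * C * α) * (Real.sqrt L * ((k : ℝ) * p) ^ e) := by
      calc β₁ * L ^ ((1:ℝ)/2 - ε) * (Real.sqrt L * ((k : ℝ) * p) ^ e)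
          = β₁ * (Real.sqrt L * (L ^ ((1:ℝ)/2 - ε) * ((k : ℝ) * p) ^ e)) := by ring
        _ ≤ (m : ℝ) ^ e := key1
        _ ≤ 8 * (C * Real.sqrt L * (α * ((k : ℝ) * p) ^ e)) := by linarith
        _ = (8 * C * α) * (Real.sqrt L * ((k : ℝ) * p) ^ e) := by ring
    have key3 : β₁ * L ^ ((1:ℝ)/2 - ε) ≤ 8 * C * α :=
      le_of_mul_le_mul_right key2 hpos
    have hLpow0 : (0:ℝ) ≤ L ^ ((1:ℝ)/2 - ε) := Real.rpow_nonneg (le_of_lt hL0) _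
    calc min (β₁ / (8 * C)) (Real.sqrt (β/2)) * L ^ ((1:ℝ)/2 - ε)
        ≤ (β₁ / (8 * C)) * L ^ ((1:ℝ)/2 - ε) :=
          mul_le_mul_of_nonneg_right (min_le_left _ _) hLpow0
      _ ≤ α := by
          rw [div_mul_eq_mul_div, div_le_iff₀ (by positivity)]
          calc β₁ * L ^ ((1:ℝ)/2 - ε) ≤ 8 * C * α := key3
            _ = α * (8 * C) := by ring
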